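/- Under the same assumptions (C_ζ(λ_jE−A)^{-1}B = 0 for all j), with Ã = W^H A V, the entries satisfy Ã_{ij} = −ζ_i H_ζ(ζ_i)/(ζ_i − λ_j), i.e., Ã = −Z·D·C with Z = diag(ζ_1,…,ζ_k), and consequently for each j, e_jᵀ(ζ_j Ẽ − Ã) = 0, so the pencil (Ẽ, Ã) has ζ_j as a generalized eigenvalue for every j = 1,…,k. -/

import Mathlib

open Matrix

theorem projected_A_and_pencil_poles (n k : ℕ)
    (E A : Matrix (Fin n) (Fin n) ℂ) (B Czeta : Fin n → ℂ)
    (zeta lam : Fin k → ℂ)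
    (hzeta : Function.Injective zeta) (hlam : Function.Injective lam)
    (hdisj : ∀ i j, zeta i ≠ lam j)
    (hinvz : ∀ i, IsUnit (zeta i • E - A))
    (hinvl : ∀ j, IsUnit (lam j • E - A))
    (hker : ∀ j, Czeta ⬝ᵥ ((lam j • E - A)⁻¹ *ᵥ B) = 0)
    (Hzeta : ℂ → ℂ) (hH : Hzeta = fun s => Czeta ⬝ᵥ ((s • E - A)⁻¹ *ᵥ B))
    (WH : Matrix (Fin k) (Fin n) ℂ)
    (hW : WH = Matrix.of fun i l => (Czeta ᵥ* (zeta i • E - A)⁻¹) l)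
    (V : Matrix (Fin n) (Fin k) ℂ)
    (hV : V = Matrix.of fun l j => ((lam j • E - A)⁻¹ *ᵥ B) l) :
    (∀ i j, (WH * A * V) i j = -(zeta i * Hzeta (zeta i)) / (zeta i - lam j)) ∧
      WH * A * V = -(Matrix.diagonal zeta * Matrix.diagonal (fun i => Hzeta (zeta i)) *
        Matrix.of fun i j => 1 / (zeta i - lam j)) ∧
      (∀ j, (Pi.single j (1 : ℂ)) ᵥ* (zeta j • (WH * E * V) - WH * A * V) = 0) := by
  have hdz : ∀ i j, zeta i - lam j ≠ 0 := fun i j => sub_ne_zero.mpr (hdisj i j)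
  set M : Fin k → Matrix (Fin n) (Fin n) ℂ := fun i => (zeta i • E - A)⁻¹ with hM
  set N : Fin k → Matrix (Fin n) (Fin n) ℂ := fun j => (lam j • E - A)⁻¹ with hN
  have hMz : ∀ i, M i * (zeta i • E - A) = 1 := fun i =>
    Matrix.nonsing_inv_mul _ ((Matrix.isUnit_iff_isUnit_det _).mp (hinvz i))
  have hNl : ∀ j, (lam j • E - A) * N j = 1 := fun j =>
    Matrix.mul_nonsing_inv _ ((Matrix.isUnit_iff_isUnit_det _).mp (hinvl j))
  -- entry formula for the sandwiched product
  have hentry : ∀ (X : Matrix (Fin n) (Fin n) ℂ) (i j : Fin k),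
      (WH * X * V) i j = Czeta ⬝ᵥ ((M i * X * N j) *ᵥ B) := by
    intro X i j
    rw [Matrix.mul_apply']
    have h1 : (WH * X) i = (Czeta ᵥ* M i) ᵥ* X := by
      funext l
      rw [Matrix.mul_apply']
      subst hW
      rfl
    have h2 : (fun l => V l j) = N j *ᵥ B := by
      subst hV; rfl
    rw [h1, h2, Matrix.vecMul_vecMul, ← Matrix.dotProduct_mulVec, Matrix.mulVec_mulVec]
  -- sandwich identities
  have hsandA : ∀ i j, M i * A * N j =
      (zeta i - lam j)⁻¹ • (lam j • N j - zeta i • M i) := by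
    intro i j
    have key : (zeta i - lam j) • A =
        lam j • (zeta i • E - A) - zeta i • (lam j • E - A) := by
      module
    have h2 : M i * ((zeta i - lam j) • A) * N j = lam j • N j - zeta i • M i := by
      rw [key, Matrix.mul_sub, Matrix.sub_mul]
      rw [mul_smul_comm, mul_smul_comm, smul_mul_assoc, smul_mul_assoc,
        hMz i, Matrix.one_mul, Matrix.mul_assoc, hNl j, Matrix.mul_one]
    have h3 : M i * ((zeta i - lam j) • A) * N j =
        (zeta i - lam j) • (M i * A * N j) := by
      rw [mul_smul_comm, smul_mul_assoc]
    rw [h3] at h2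
    rw [← h2, smul_smul, inv_mul_cancel₀ (hdz i j), one_smul]
  have hsandE : ∀ i j, M i * E * N j =
      (zeta i - lam j)⁻¹ • (N j - M i) := by
    intro i j
    have key : (zeta i - lam j) • E = (zeta i • E - A) - (lam j • E - A) := by
      module
    have h2 : M i * ((zeta i - lam j) • E) * N j = N j - M i := by
      rw [key, Matrix.mul_sub, Matrix.sub_mul, hMz i, Matrix.one_mul,
        Matrix.mul_assoc, hNl j, Matrix.mul_one]
    have h3 : M i * ((zeta i - lam j) • E) * N j =
        (zeta i - lam j) • (M i * E * N j) := by
      rw [mul_smul_comm, smul_mul_assoc]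
    rw [h3] at h2
    rw [← h2, smul_smul, inv_mul_cancel₀ (hdz i j), one_smul]
  have hHz : ∀ i, Hzeta (zeta i) = Czeta ⬝ᵥ (M i *ᵥ B) := by
    intro i; rw [hH]
  -- entry values
  have hAent : ∀ i j, (WH * A * V) i j = -(zeta i * Hzeta (zeta i)) / (zeta i - lam j) := by
    intro i j
    rw [hentry, hsandA, Matrix.smul_mulVec, dotProduct_smul,
      Matrix.sub_mulVec, dotProduct_sub, Matrix.smul_mulVec,
      Matrix.smul_mulVec, dotProduct_smul, dotProduct_smul,
      hker j, ← hHz i]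
    simp only [smul_eq_mul]
    field_simp
    ring
  have hEent : ∀ i j, (WH * E * V) i j = -(Hzeta (zeta i)) / (zeta i - lam j) := by
    intro i j
    rw [hentry, hsandE, Matrix.smul_mulVec, dotProduct_smul,
      Matrix.sub_mulVec, dotProduct_sub, hker j, ← hHz i]
    simp only [smul_eq_mul]
    field_simp
    ring
  refine ⟨hAent, ?_, ?_⟩
  · ext i j
    rw [hAent i j]
    simp [Matrix.mul_apply, Matrix.diagonal, Matrix.neg_apply, Finset.mul_sum]
    rw [div_eq_mul_inv]; ring
  · intro j
    funext m
    have h1 : ∀ (X : Matrix (Fin k) (Fin k) ℂ), (Pi.single j (1:ℂ)) ᵥ* X = fun l => X j l := by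
      intro X; funext l
      simp [Matrix.vecMul, dotProduct, Pi.single_apply]
    rw [h1]
    simp only [Matrix.sub_apply, Matrix.smul_apply, hAent, hEent, smul_eq_mul, Pi.zero_apply]
    field_simp
    ring
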